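/- The Post Correspondence Problem reduces (many-one, computably) to the following problem about deducibility in a rule system: given finite alphabets, strings s₁,…,sₙ and t₁,…,tₙ, there exist indices i₁,…,i_k ∈ {1,…,n} with s_{i₁}·…·s_{i_k} = t_{i₁}·…·t_{i_k} if and only if the term G(g,g) is derivable for some closed grant g in the inductively defined derivation system with axioms G(G_{s_i}(Pr), G_{t_i}(Pr)) for i = 1,…,n and rule 'from G(g₁, g₂) derive G(G_{s_i}(g₁), G_{t_i}(g₂)) for each i'. Consequently the derivability question is undecidable. -/
import Mathlib


/- Terms freely generated by a constant `pr`, one unary constructor `gs σ` per symbol `σ`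
of the alphabet, and a binary constructor `G`. -/
inductive Tm (σ : Type) where
  | pr : Tm σ
  | gs : σ → Tm σ → Tm σ
  | G : Tm σ → Tm σ → Tm σ

/-- `Gstr s u` is the composition `G_{σ₁}(…(G_{σ_m}(u))…)` for the string `s = σ₁…σ_m`. -/
def Gstr {σ : Type} : List σ → Tm σ → Tm σ
  | [], u => u
  | a :: s, u => Tm.gs a (Gstr s u)

/-- The derivation system with axioms `G(G_{sᵢ}(Pr), G_{tᵢ}(Pr))` and closure rule
"from `G(u, v)` derive `G(G_{sᵢ}(u), G_{tᵢ}(v))`", for each pair `(sᵢ, tᵢ)`. -/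
inductive Deriv {σ : Type} (pairs : List (List σ × List σ)) : Tm σ → Prop
  | ax {s t : List σ} : (s, t) ∈ pairs → Deriv pairs (Tm.G (Gstr s Tm.pr) (Gstr t Tm.pr))
  | step {s t : List σ} {u v : Tm σ} : (s, t) ∈ pairs → Deriv pairs (Tm.G u v) →
      Deriv pairs (Tm.G (Gstr s u) (Gstr t v))

/-- PCP reduction: the instance of the Post Correspondence Problem given by the pairs
`(sᵢ, tᵢ)` has a solution — a nonempty index sequence with equal concatenations — if and only
if `G(g, g)` is derivable for some closed grant (term) `g` in the corresponding derivation
system.  (Since PCP is undecidable, derivability is undecidable; the map sending a PCP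
instance to the corresponding derivability instance is the identity on the data, hence
computable, so this is a many-one reduction.) -/

lemma Gstr_append {σ : Type} (a b : List σ) (u : Tm σ) :
    Gstr (a ++ b) u = Gstr a (Gstr b u) := by
  induction a with
  | nil => rfl
  | cons x xs ih => simp [Gstr, ih]

lemma Gstr_inj {σ : Type} : ∀ (a b : List σ), Gstr a Tm.pr = Gstr b Tm.pr → a = b
  | [], [], _ => rfl
  | [], _ :: _, h => by simp [Gstr] at h
  | _ :: _, [], h => by simp [Gstr] at h
  | x :: xs, y :: ys, h => by
      simp only [Gstr, Tm.gs.injEq] at h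
      exact h.1 ▸ congrArg (x :: ·) (Gstr_inj xs ys h.2)

lemma deriv_of_list {σ : Type} (pairs : List (List σ × List σ)) :
    ∀ l : List (List σ × List σ), l ≠ [] → (∀ p ∈ l, p ∈ pairs) →
      Deriv pairs (Tm.G (Gstr (l.map Prod.fst).flatten Tm.pr)
        (Gstr (l.map Prod.snd).flatten Tm.pr))
  | [], h, _ => absurd rfl h
  | [(s, t)], _, hp => by
      simpa [Gstr_append] using Deriv.ax (hp _ (by simp))
  | (s, t) :: q :: l, _, hp => by
      have ih := deriv_of_list pairs (q :: l) (by simp) (fun p hpl => hp p (by simp [hpl]))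
      simpa [Gstr_append] using Deriv.step (hp (s, t) (by simp)) ih

lemma list_of_deriv {σ : Type} {pairs : List (List σ × List σ)} {u : Tm σ}
    (h : Deriv pairs u) :
    ∃ l : List (List σ × List σ), l ≠ [] ∧ (∀ p ∈ l, p ∈ pairs) ∧
      u = Tm.G (Gstr (l.map Prod.fst).flatten Tm.pr)
        (Gstr (l.map Prod.snd).flatten Tm.pr) := by
  induction h with
  | @ax s t hst =>
      exact ⟨[(s, t)], by simp, by simpa using hst, by simp [Gstr_append]⟩
  | @step s t u v hst _ ih =>
      obtain ⟨l, hne, hp, heq⟩ := ih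
      obtain ⟨h1, h2⟩ := Tm.G.injEq .. ▸ heq
      exact ⟨(s, t) :: l, by simp, fun p hpl => by rcases List.mem_cons.mp hpl with rfl | h; exact hst; exact hp _ h,
        by simp [Gstr_append, ← h1, ← h2]⟩

theorem pcp_reduces_to_derivability {σ : Type} (pairs : List (List σ × List σ)) :
    (∃ l : List (List σ × List σ), l ≠ [] ∧ (∀ p ∈ l, p ∈ pairs) ∧
        (l.map Prod.fst).flatten = (l.map Prod.snd).flatten) ↔
      (∃ g : Tm σ, Deriv pairs (Tm.G g g)) := by
  constructor
  · rintro ⟨l, hne, hp, heq⟩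
    exact ⟨_, heq ▸ deriv_of_list pairs l hne hp⟩
  · rintro ⟨g, hg⟩
    obtain ⟨l, hne, hp, heq⟩ := list_of_deriv hg
    obtain ⟨h1, h2⟩ := Tm.G.injEq .. ▸ heq
    exact ⟨l, hne, hp, Gstr_inj _ _ (h1.symm.trans h2)⟩
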